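/- Let G=(V,E) be a cubic graph with |V|=n and let (H,λ) be the temporal graph obtained from G (and a proper 4-edge-coloring c of G) by the Construction. Then μ_2(H,λ) ≤ 7·α(G), where μ_2(H,λ) is the maximum cardinality of a 2-temporal matching of (H,λ) and α(G) is the maximum cardinality of an independent set of G. -/

import Mathlib

variable {V : Type*}

/-- The underlying (static) graph of a temporal graph given by its time-labeling. -/
def ugraph (lab : Sym2 V → Finset ℕ) : SimpleGraph V where
  Adj x y := x ≠ y ∧ (lab s(x, y)).Nonempty
  symm := by
    constructor
    intro x y h
    exact ⟨h.1.symm, by rw [Sym2.eq_swap]; exact h.2⟩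
  loopless := by constructor; intro x h; exact h.1 rfl

/-- `(e, t)` is a time edge of the temporal graph given by `lab`. -/
def IsTimeEdge (lab : Sym2 V → Finset ℕ) (p : Sym2 V × ℕ) : Prop :=
  ¬ p.1.IsDiag ∧ p.2 ∈ lab p.1

/-- Two time edges are Δ-independent: edges disjoint or labels at least Δ apart. -/
def DIndep (Δ : ℕ) (p q : Sym2 V × ℕ) : Prop :=
  (∀ v, v ∈ p.1 → v ∉ q.1) ∨ Δ ≤ ((p.2 : ℤ) - (q.2 : ℤ)).natAbs

/-- A Δ-temporal matching. -/
def IsTM (lab : Sym2 V → Finset ℕ) (Δ : ℕ) (M : Finset (Sym2 V × ℕ)) : Prop :=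
  (∀ p ∈ M, IsTimeEdge lab p) ∧ ∀ p ∈ M, ∀ q ∈ M, p ≠ q → DIndep Δ p q

/-- μ_Δ: maximum cardinality of a Δ-temporal matching. -/
noncomputable def tmu (lab : Sym2 V → Finset ℕ) (Δ : ℕ) : ℕ :=
  sSup {k | ∃ M : Finset (Sym2 V × ℕ), IsTM lab Δ M ∧ M.card = k}

/-- The temporal graph has lifetime `T`. -/
def HasLifetime (lab : Sym2 V → Finset ℕ) (T : ℕ) : Prop :=
  (∀ e, ∀ t ∈ lab e, 1 ≤ t ∧ t ≤ T) ∧ ∃ e : Sym2 V, ¬ e.IsDiag ∧ T ∈ lab e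

/-- The snapshot at time `t`. -/
def tsnapshot (lab : Sym2 V → Finset ℕ) (t : ℕ) : SimpleGraph V where
  Adj x y := x ≠ y ∧ t ∈ lab s(x, y)
  symm := by
    constructor
    intro x y h
    exact ⟨h.1.symm, by rw [Sym2.eq_swap]; exact h.2⟩
  loopless := by constructor; intro x h; exact h.1 rfl

/-- 𝒢|_S : keep only time edges with label in `S`. -/
def trestrict (lab : Sym2 V → Finset ℕ) (S : Finset ℕ) : Sym2 V → Finset ℕ :=
  fun e => lab e ∩ S

/-- A finite matching of a static graph. -/
def IsMatchingF (G : SimpleGraph V) (R : Finset (Sym2 V)) : Prop :=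
  (∀ e ∈ R, e ∈ G.edgeSet) ∧ ∀ e ∈ R, ∀ e' ∈ R, e ≠ e' → ∀ v, v ∈ e → v ∉ e'

/-- ν(G): maximum cardinality of a matching. -/
noncomputable def matchNum (G : SimpleGraph V) : ℕ :=
  sSup {k | ∃ R : Finset (Sym2 V), IsMatchingF G R ∧ R.card = k}

/-- An independent set of a static graph. -/
def IsIndepF (G : SimpleGraph V) (S : Finset V) : Prop :=
  ∀ u ∈ S, ∀ v ∈ S, ¬ G.Adj u v

/-- α(G): maximum cardinality of an independent set. -/
noncomputable def indepNum (G : SimpleGraph V) : ℕ :=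
  sSup {k | ∃ S : Finset V, IsIndepF G S ∧ S.card = k}

/-- The Δ-temporal line graph: vertices are the time edges, two distinct time edges are
adjacent iff the edges share a vertex and the labels are less than Δ apart. -/
def tline (lab : Sym2 V → Finset ℕ) (Δ : ℕ) :
    SimpleGraph {p : Sym2 V × ℕ // IsTimeEdge lab p} where
  Adj p q := p ≠ q ∧ (∃ v, v ∈ p.1.1 ∧ v ∈ q.1.1) ∧ ((p.1.2 : ℤ) - (q.1.2 : ℤ)).natAbs < Δ
  symm := by
    constructor
    rintro p q ⟨hne, ⟨v, hv1, hv2⟩, hlt⟩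
    exact ⟨hne.symm, ⟨v, hv2, hv1⟩, by omega⟩
  loopless := by constructor; rintro p ⟨hne, -⟩; exact hne rfl

/-- The side `α ∈ {0,1}` (encoded as a `Bool`) of an edge `e`, determined by
`α ≡ c(e) (mod 2)` where `c(e) ∈ {1,2,3,4}` is the color of `e`. -/
def aV {V : Type*} (c : Sym2 V → ℕ) (e : Sym2 V) : Bool := c e % 2 == 1

/-- The time slot of the two edges incident to `w_e`: 1 if `c(e) ∈ {1,2}`, 3 if
`c(e) ∈ {3,4}`. -/
def tE {V : Type*} (c : Sym2 V → ℕ) (e : Sym2 V) : ℕ := if c e ≤ 2 then 1 else 3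

/-- `c` is a proper 4-edge-coloring of `G` with colors in `{1,2,3,4}`. -/
def ProperEC {V : Type*} (G : SimpleGraph V) (c : Sym2 V → ℕ) : Prop :=
  (∀ e ∈ G.edgeSet, 1 ≤ c e ∧ c e ≤ 4) ∧
  ∀ e ∈ G.edgeSet, ∀ e' ∈ G.edgeSet, e ≠ e' → (∃ v, v ∈ e ∧ v ∈ e') → c e ≠ c e'

/-- The time-labeling `lab` (on the vertex set `(V × Bool) ⊕ Sym2 V`, where
`(v, false)` plays the role of `v₀`, `(v, true)` of `v₁`, and `Sum.inr e` of `w_e`)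
is exactly the temporal graph `(H, λ)` of the Construction applied to `G` and `c`:
every edge `{v₀,v₁}` has label set `{2}`; for every edge `e` of `G` and each endpoint
`u ∈ e`, the edge `{w_e, u_α}` has label set `{tE c e}`; and no other pair carries
any label. -/
def IsConstruction {V : Type*} (G : SimpleGraph V) (c : Sym2 V → ℕ)
    (lab : Sym2 ((V × Bool) ⊕ Sym2 V) → Finset ℕ) : Prop :=
  (∀ v : V, lab s(Sum.inl (v, false), Sum.inl (v, true)) = {2}) ∧
  (∀ e ∈ G.edgeSet, ∀ u, u ∈ e →
    lab s(Sum.inr e, Sum.inl (u, aV c e)) = {tE c e}) ∧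
  (∀ f : Sym2 ((V × Bool) ⊕ Sym2 V), (lab f).Nonempty →
    (∃ v : V, f = s(Sum.inl (v, false), Sum.inl (v, true))) ∨
    (∃ e ∈ G.edgeSet, ∃ u, u ∈ e ∧ f = s(Sum.inr e, Sum.inl (u, aV c e))))


open Finset

lemma greedy_indep {V : Type*} [Fintype V] [DecidableEq V] (G : SimpleGraph V)
    [DecidableRel G.Adj] (hdeg : ∀ v, G.degree v ≤ 3) (B : Finset V) :
    ∃ S ⊆ B, IsIndepF G S ∧ B.card ≤ 4 * S.card := by
  induction B using Finset.strongInduction with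
  | _ B ih =>
    rcases B.eq_empty_or_nonempty with rfl | ⟨v, hv⟩
    · exact ⟨∅, by simp, fun u hu => by simp at hu, by simp⟩
    · set B' := B \ insert v (G.neighborFinset v) with hB'
      have hvB' : v ∉ B' := by simp [hB']
      have hsub : B' ⊆ B := sdiff_subset
      have hss : B' ⊂ B := ssubset_iff_of_subset hsub |>.2 ⟨v, hv, hvB'⟩
      obtain ⟨S', hS'B, hS'i, hS'c⟩ := ih B' hss
      have hvS' : v ∉ S' := fun h => hvB' (hS'B h)
      have hnadj : ∀ w ∈ S', ¬ G.Adj v w := by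
        intro w hw hadj
        have := hS'B hw
        rw [hB', Finset.mem_sdiff] at this
        exact this.2 (Finset.mem_insert.2 (Or.inr ((G.mem_neighborFinset v w).2 hadj)))
      refine ⟨insert v S', ?_, ?_, ?_⟩
      · intro x hx
        rcases Finset.mem_insert.1 hx with rfl | hx2
        · exact hv
        · exact hsub (hS'B hx2)
      · intro x hx y hy hadj
        rcases Finset.mem_insert.1 hx with rfl | hx2
        · rcases Finset.mem_insert.1 hy with rfl | hy2
          · exact G.loopless.irrefl _ hadj
          · exact hnadj y hy2 hadj
        · rcases Finset.mem_insert.1 hy with rfl | hy2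
          · exact hnadj x hx2 hadj.symm
          · exact hS'i x hx2 y hy2 hadj
      · have hcov : B ⊆ B' ∪ insert v (G.neighborFinset v) := by
          intro b hb
          by_cases hbn : b ∈ insert v (G.neighborFinset v)
          · exact Finset.mem_union_right _ hbn
          · exact Finset.mem_union_left _ (Finset.mem_sdiff.2 ⟨hb, hbn⟩)
        have h1 : B.card ≤ B'.card + (insert v (G.neighborFinset v)).card :=
          le_trans (Finset.card_le_card hcov) (Finset.card_union_le _ _)
        have h2 : (insert v (G.neighborFinset v)).card ≤ 4 := by
          have h3 := Finset.card_insert_le v (G.neighborFinset v)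
          have h4 := hdeg v
          rw [← G.card_neighborFinset_eq_degree v] at h4
          omega
        rw [Finset.card_insert_of_notMem hvS']
        omega

lemma exists_indep_sub {V : Type*} [DecidableEq V] (G : SimpleGraph V)
    (A : Finset V) :
    ∀ I : Finset (Sym2 V), (∀ u ∈ A, ∀ v ∈ A, G.Adj u v → s(u, v) ∈ I) →
      ∃ S : Finset V, IsIndepF G S ∧ A.card ≤ S.card + I.card := by
  induction A using Finset.strongInduction with
  | _ A ih =>
    intro I hAI
    by_cases hind : IsIndepF G A
    · exact ⟨A, hind, by omega⟩
    · rw [IsIndepF] at hind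
      push_neg at hind
      obtain ⟨u, hu, v, hv, hadj⟩ := hind
      have hss : A.erase u ⊂ A := Finset.erase_ssubset hu
      have he : s(u, v) ∈ I := hAI u hu v hv hadj
      have hsub : ∀ a ∈ A.erase u, ∀ b ∈ A.erase u, G.Adj a b → s(a, b) ∈ I.erase s(u, v) := by
        intro a ha b hb hab
        refine Finset.mem_erase.2 ⟨?_, hAI a (Finset.erase_subset u A ha) b
          (Finset.erase_subset u A hb) hab⟩
        intro hEq
        have : u ∈ s(a, b) := hEq ▸ Sym2.mem_mk_left u v
        rcases Sym2.mem_iff.1 this with rfl | rfl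
        · exact Finset.notMem_erase u A ha
        · exact Finset.notMem_erase u A hb
      obtain ⟨S, hSi, hSc⟩ := ih (A.erase u) hss (I.erase s(u, v)) hsub
      have h1 : (I.erase s(u, v)).card = I.card - 1 := Finset.card_erase_of_mem he
      have h2 : 1 ≤ I.card := Finset.card_pos.2 ⟨_, he⟩
      have h3 : A.card = (A.erase u).card + 1 := by
        rw [Finset.card_erase_of_mem hu]
        have := Finset.card_pos.2 ⟨u, hu⟩
        omega
      exact ⟨S, hSi, by omega⟩


section Aux

/-- Commutative merge of two options. -/
def omerge {S : Type*} [DecidableEq S] : Option S → Option S → Option S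
  | none, b => b
  | some a, none => some a
  | some a, some b => if a = b then some a else none

lemma omerge_comm {S : Type*} [DecidableEq S] (x y : Option S) :
    omerge x y = omerge y x := by
  cases x with
  | none => cases y <;> rfl
  | some a =>
    cases y with
    | none => rfl
    | some b =>
      by_cases h : a = b
      · subst h; rfl
      · simp [omerge, h, Ne.symm h]

def gE {V : Type*} : (V × Bool) ⊕ Sym2 V → Option (Sym2 V)
  | .inl _ => none
  | .inr e => some e

def gV {V : Type*} : (V × Bool) ⊕ Sym2 V → Option V
  | .inl p => some p.1
  | .inr _ => none

def fE {V : Type*} [DecidableEq V] : Sym2 ((V × Bool) ⊕ Sym2 V) → Option (Sym2 V) :=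
  Sym2.lift ⟨fun x y => omerge (gE x) (gE y), fun x y => omerge_comm _ _⟩

def fV {V : Type*} [DecidableEq V] : Sym2 ((V × Bool) ⊕ Sym2 V) → Option V :=
  Sym2.lift ⟨fun x y => omerge (gV x) (gV y), fun x y => omerge_comm _ _⟩

@[simp] lemma fE_vv {V : Type*} [DecidableEq V] (a b : V × Bool) :
    fE (s(Sum.inl a, Sum.inl b) : Sym2 ((V × Bool) ⊕ Sym2 V)) = none := rfl

@[simp] lemma fE_we {V : Type*} [DecidableEq V] (e : Sym2 V) (a : V × Bool) :
    fE (s(Sum.inr e, Sum.inl a) : Sym2 ((V × Bool) ⊕ Sym2 V)) = some e := rfl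

@[simp] lemma fV_vv {V : Type*} [DecidableEq V] (v : V) (b b' : Bool) :
    fV (s(Sum.inl (v, b), Sum.inl (v, b')) : Sym2 ((V × Bool) ⊕ Sym2 V)) = some v := by
  show omerge (some v) (some v) = some v
  simp [omerge]

end Aux

/-- For a cubic graph `G` with a proper 4-edge-coloring `c` and the
temporal graph `(H,λ)` of the Construction, `μ₂(H,λ) ≤ 7·α(G)`. -/
theorem stmt7 {V : Type*} [Fintype V] [DecidableEq V]
    (G : SimpleGraph V) [DecidableRel G.Adj] (hcubic : ∀ v : V, G.degree v = 3)
    (c : Sym2 V → ℕ) (hc : ProperEC G c)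
    (lab : Sym2 ((V × Bool) ⊕ Sym2 V) → Finset ℕ) (hcons : IsConstruction G c lab) :
    tmu lab 2 ≤ 7 * indepNum G := by
  classical
  have key : ∀ M : Finset (Sym2 ((V × Bool) ⊕ Sym2 V) × ℕ),
      IsTM lab 2 M → M.card ≤ 7 * indepNum G := by
    intro M hM
    -- classification of time edges in M
    have hclass : ∀ p ∈ M,
        (∃ v : V, p = (s(Sum.inl (v, false), Sum.inl (v, true)), 2)) ∨
        (∃ e ∈ G.edgeSet, ∃ u, u ∈ e ∧
          p = (s(Sum.inr e, Sum.inl (u, aV c e)), tE c e)) := by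
      rintro ⟨pe, pt⟩ hp
      have hte := hM.1 _ hp
      have hne : (lab pe).Nonempty := ⟨pt, hte.2⟩
      rcases hcons.2.2 pe hne with ⟨v, hv⟩ | ⟨e, heE, u, hue, hfe⟩
      · left
        refine ⟨v, ?_⟩
        have h2 : pt ∈ lab pe := hte.2
        rw [hv, hcons.1 v] at h2
        have h3 := Finset.mem_singleton.1 h2
        rw [hv, h3]
      · right
        refine ⟨e, heE, u, hue, ?_⟩
        have h2 : pt ∈ lab pe := hte.2
        rw [hfe, hcons.2.1 e heE u hue] at h2
        have h3 := Finset.mem_singleton.1 h2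
        rw [hfe, h3]
    rcases M.eq_empty_or_nonempty with rfl | ⟨p0, hp0⟩
    · simp
    have hV : Nonempty V := by
      rcases hclass p0 hp0 with ⟨v, _⟩ | ⟨e, _, u, _, _⟩
      · exact ⟨v⟩
      · exact ⟨u⟩
    obtain ⟨v0⟩ := hV
    set A : Finset V := Finset.univ.filter
      (fun v => (s(Sum.inl (v, false), Sum.inl (v, true)), (2 : ℕ)) ∈ M) with hA
    set Ew : Finset (Sym2 V) := G.edgeFinset.filter
      (fun e => ∃ p ∈ M, fE p.1 = some e) with hEw
    set Mv := M.filter (fun p => fE p.1 = none) with hMv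
    set Mw := M.filter (fun p => ¬ fE p.1 = none) with hMw
    have hsplit : Mv.card + Mw.card = M.card :=
      Finset.card_filter_add_card_filter_not _
    have hMvA : Mv.card ≤ A.card := by
      apply Finset.card_le_card_of_injOn (fun p => (fV p.1).getD v0)
      · intro p hp
        simp only [hMv, Finset.coe_filter, Set.mem_setOf_eq] at hp
        rcases hclass p hp.1 with ⟨v, rfl⟩ | ⟨e, heE, u, hue, rfl⟩
        · simp only [fV_vv, Option.getD_some]
          rw [Finset.mem_coe, hA, Finset.mem_filter]
          exact ⟨Finset.mem_univ v, hp.1⟩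
        · exact absurd (by simp : fE (s(Sum.inr e, Sum.inl (u, aV c e)) :
            Sym2 ((V × Bool) ⊕ Sym2 V)) = some e) (by simp [hp.2])
      · intro p hp q hq hfeq
        simp only [hMv, Finset.coe_filter, Set.mem_setOf_eq] at hp hq
        rcases hclass p hp.1 with ⟨v, rfl⟩ | ⟨e, heE, u, hue, rfl⟩
        · rcases hclass q hq.1 with ⟨v', rfl⟩ | ⟨e', heE', u', hue', rfl⟩
          · simp only [fV_vv, Option.getD_some] at hfeq
            rw [hfeq]
          · exact absurd (by simp : fE (s(Sum.inr e', Sum.inl (u', aV c e')) :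
              Sym2 ((V × Bool) ⊕ Sym2 V)) = some e') (by simp [hq.2])
        · exact absurd (by simp : fE (s(Sum.inr e, Sum.inl (u, aV c e)) :
            Sym2 ((V × Bool) ⊕ Sym2 V)) = some e) (by simp [hp.2])
    have hMwEw : Mw.card ≤ Ew.card := by
      apply Finset.card_le_card_of_injOn (fun p => (fE p.1).getD s(v0, v0))
      · intro p hp
        simp only [hMw, Finset.coe_filter, Set.mem_setOf_eq] at hp
        rcases hclass p hp.1 with ⟨v, rfl⟩ | ⟨e, heE, u, hue, rfl⟩
        · exact absurd (by simp : fE (s(Sum.inl (v, false), Sum.inl (v, true)) :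
            Sym2 ((V × Bool) ⊕ Sym2 V)) = none) hp.2
        · simp only [fE_we, Option.getD_some]
          rw [Finset.mem_coe, hEw, Finset.mem_filter]
          exact ⟨SimpleGraph.mem_edgeFinset.2 heE, _, hp.1, by simp⟩
      · intro p hp q hq hfeq
        simp only [hMw, Finset.coe_filter, Set.mem_setOf_eq] at hp hq
        rcases hclass p hp.1 with ⟨v, rfl⟩ | ⟨e, heE, u, hue, rfl⟩
        · exact absurd (by simp : fE (s(Sum.inl (v, false), Sum.inl (v, true)) :
            Sym2 ((V × Bool) ⊕ Sym2 V)) = none) hp.2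
        rcases hclass q hq.1 with ⟨v', rfl⟩ | ⟨e', heE', u', hue', rfl⟩
        · exact absurd (by simp : fE (s(Sum.inl (v', false), Sum.inl (v', true)) :
            Sym2 ((V × Bool) ⊕ Sym2 V)) = none) hq.2
        simp only [fE_we, Option.getD_some] at hfeq
        subst hfeq
        by_contra hne
        rcases hM.2 _ hp.1 _ hq.1 hne with hdisj | htime
        · exact hdisj (Sum.inr e) (Sym2.mem_mk_left _ _) (Sym2.mem_mk_left _ _)
        · simp only at htime
          omega
    -- each edge of Ew has an endpoint outside A
    have hEwA : ∀ e ∈ Ew, ∃ u, u ∈ e ∧ u ∉ A := by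
      intro e he
      rw [hEw, Finset.mem_filter] at he
      obtain ⟨p, hpM, hpe⟩ := he.2
      rcases hclass p hpM with ⟨v, rfl⟩ | ⟨e', heE', u, hue, rfl⟩
      · simp at hpe
      · have he' : e' = e := by simpa using hpe
        subst he'
        refine ⟨u, hue, ?_⟩
        intro huA
        rw [hA, Finset.mem_filter] at huA
        have hq : (s(Sum.inl (u, false), Sum.inl (u, true)), (2 : ℕ)) ∈ M := huA.2
        have hpq : (s(Sum.inr e', Sum.inl (u, aV c e')), tE c e') ≠
            (s(Sum.inl (u, false), Sum.inl (u, true)), (2 : ℕ)) := by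
          intro h
          have h1 : s(Sum.inr e', Sum.inl (u, aV c e')) =
              (s(Sum.inl (u, false), Sum.inl (u, true)) : Sym2 ((V × Bool) ⊕ Sym2 V)) :=
            congrArg Prod.fst h
          have hmem : (Sum.inr e' : (V × Bool) ⊕ Sym2 V) ∈
              (s(Sum.inl (u, false), Sum.inl (u, true)) : Sym2 ((V × Bool) ⊕ Sym2 V)) := by
            rw [← h1]
            exact Sym2.mem_mk_left _ _
          rcases Sym2.mem_iff.1 hmem with h' | h' <;> simp at h'
        rcases hM.2 _ hpM _ hq hpq with hdisj | htime
        · refine hdisj (Sum.inl (u, aV c e')) (Sym2.mem_mk_right _ _) ?_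
          cases haV : aV c e' <;> simp [Sym2.mem_iff]
        · simp only at htime
          rw [tE] at htime
          split at htime <;> omega
    -- internal edges of A
    set I : Finset (Sym2 V) := G.edgeFinset.filter (fun e => ∀ v ∈ e, v ∈ A) with hI
    have hdisjEI : Disjoint Ew I := by
      rw [Finset.disjoint_left]
      intro e heEw heI
      obtain ⟨u, hue, hunA⟩ := hEwA e heEw
      rw [hI, Finset.mem_filter] at heI
      exact hunA (heI.2 u hue)
    have hcard1 : Ew.card + I.card ≤ G.edgeFinset.card := by
      rw [← Finset.card_union_of_disjoint hdisjEI]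
      refine Finset.card_le_card (Finset.union_subset ?_ ?_)
      · rw [hEw]; exact Finset.filter_subset _ _
      · rw [hI]; exact Finset.filter_subset _ _
    have hAI : ∀ u ∈ A, ∀ v ∈ A, G.Adj u v → s(u, v) ∈ I := by
      intro u hu v hv hadj
      rw [hI, Finset.mem_filter]
      refine ⟨SimpleGraph.mem_edgeFinset.2 hadj, ?_⟩
      intro w hw
      rcases Sym2.mem_iff.1 hw with rfl | rfl <;> assumption
    obtain ⟨S1, hS1i, hS1c⟩ := exists_indep_sub G A I hAI
    obtain ⟨S2, -, hS2i, hS2c⟩ := greedy_indep G (fun v => (hcubic v).le) Finset.univ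
    have hbdd : BddAbove {k | ∃ S : Finset V, IsIndepF G S ∧ S.card = k} := by
      refine ⟨Fintype.card V, ?_⟩
      rintro k ⟨S, -, rfl⟩
      exact Finset.card_le_univ S
    have hS1le : S1.card ≤ indepNum G := le_csSup hbdd ⟨S1, hS1i, rfl⟩
    have hS2le : S2.card ≤ indepNum G := le_csSup hbdd ⟨S2, hS2i, rfl⟩
    have hsum : 3 * Fintype.card V = 2 * G.edgeFinset.card := by
      have h1 := G.sum_degrees_eq_twice_card_edges
      have h2 : ∑ v : V, G.degree v = ∑ _v : V, 3 :=
        Finset.sum_congr rfl (fun v _ => hcubic v)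
      rw [h2, Finset.sum_const, Finset.card_univ, smul_eq_mul, mul_comm] at h1
      exact h1
    rw [Finset.card_univ] at hS2c
    omega
  apply csSup_le
  · exact ⟨0, ∅, ⟨⟨fun p hp => absurd hp (Finset.notMem_empty p),
      fun p hp => absurd hp (Finset.notMem_empty p)⟩, rfl⟩⟩
  · rintro k ⟨M, hM, rfl⟩
    exact key M hM
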